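/- Let a ∈ ℝ be such that the set A = { x ∈ Ωⁿ : Z(x) ≤ a } is nonempty. Then for every x ∈ Ωⁿ and every δ ≥ 1, Z(x) ≤ a + σ²/δ + δ·m(A,x). -/

import Mathlib

open Finset

/-- The function ψ from Talagrand's kernel lemma: ψ(x) = x²/4 for x ≤ 2, x − 1 for x ≥ 2. -/
noncomputable def psi (x : ℝ) : ℝ := if x ≤ 2 then x ^ 2 / 4 else x - 1

/-- m(ν,x) = Σ_{i≤n} Σ_{ω∈Ω} ψ(d_i(ω)) μ({ω}), where
d_i(ω) = ν({y : y_i = ω ∧ y_i ≠ x_i}) / μ({ω}). -/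
noncomputable def mNu {Ω : Type*} [Fintype Ω] [DecidableEq Ω] {n : ℕ}
    (μ : Ω → ℝ) (ν : (Fin n → Ω) → ℝ) (x : Fin n → Ω) : ℝ :=
  ∑ i : Fin n, ∑ ω : Ω,
    psi ((∑ y ∈ univ.filter (fun y : Fin n → Ω => y i = ω ∧ y i ≠ x i), ν y) / μ ω) * μ ω

/-- m(A,x) = inf { m(ν,x) : ν a probability measure on Ωⁿ with ν(A) = 1 }. -/
noncomputable def mA {Ω : Type*} [Fintype Ω] [DecidableEq Ω] {n : ℕ}
    (μ : Ω → ℝ) (A : Finset (Fin n → Ω)) (x : Fin n → Ω) : ℝ :=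
  sInf { r : ℝ | ∃ ν : (Fin n → Ω) → ℝ,
    (∀ y, 0 ≤ ν y) ∧ (∑ y, ν y = 1) ∧ (∑ y ∈ A, ν y = 1) ∧ r = mNu μ ν x }

/-- Key convexity inequality: for t ∈ [0,1] and d ≥ 0, t·d ≤ t² + ψ(d). -/
lemma psi_key (t d : ℝ) (ht0 : 0 ≤ t) (ht1 : t ≤ 1) (hd : 0 ≤ d) :
    t * d ≤ t ^ 2 + psi d := by
  unfold psi
  split_ifs with h
  · nlinarith [sq_nonneg (t - d / 2)]
  · push_neg at h
    nlinarith [sq_nonneg (t - 1)]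

/-- If A = {Z ≤ a} is nonempty then for every x and every δ ≥ 1,
Z(x) ≤ a + σ²/δ + δ·m(A,x). -/
theorem Z_le_of_mA {Ω : Type*} [Fintype Ω] [DecidableEq Ω] [Nonempty Ω]
    (μ : Ω → ℝ) (hμpos : ∀ ω, 0 < μ ω) (hμsum : ∑ ω, μ ω = 1)
    (n : ℕ) (F : Finset (Ω → ℝ)) (hF : F.Nonempty)
    (hrange : ∀ f ∈ F, ∀ ω, f ω ∈ Set.Icc (0 : ℝ) 1)
    (Z : (Fin n → Ω) → ℝ)
    (hZ : ∀ x, Z x = F.sup' hF (fun f => ∑ i : Fin n, ((∑ ω, f ω * μ ω) - f (x i))))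
    (σ2 : ℝ) (hσ2 : σ2 = n * F.sup' hF (fun f => ∑ ω, f ω ^ 2 * μ ω))
    (a : ℝ) (A : Finset (Fin n → Ω)) (hAdef : A = univ.filter (fun x => Z x ≤ a))
    (hAne : A.Nonempty)
    (x : Fin n → Ω) (δ : ℝ) (hδ : 1 ≤ δ) :
    Z x ≤ a + σ2 / δ + δ * mA μ A x := by
  have hδ0 : (0:ℝ) < δ := lt_of_lt_of_le one_pos hδ
  -- the key estimate for a fixed admissible ν
  have key : ∀ ν : (Fin n → Ω) → ℝ, (∀ y, 0 ≤ ν y) → (∑ y, ν y = 1) →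
      (∑ y ∈ A, ν y = 1) → Z x ≤ a + σ2 / δ + δ * mNu μ ν x := by
    intro ν hν0 hν1 hνA
    have hν_off : ∀ y, y ∉ A → ν y = 0 := by
      intro y hy
      have hsd : ∑ z ∈ univ \ A, ν z + ∑ z ∈ A, ν z = ∑ z, ν z :=
        Finset.sum_sdiff (subset_univ A)
      rw [hν1, hνA] at hsd
      have hs : ∑ z ∈ univ \ A, ν z = 0 := by linarith
      exact (Finset.sum_eq_zero_iff_of_nonneg (fun z _ => hν0 z)).mp hs y
        (by simp [Finset.mem_sdiff, hy])
    rw [hZ]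
    apply Finset.sup'_le
    intro f hf
    have hf0 : ∀ ω, 0 ≤ f ω := fun ω => (hrange f hf ω).1
    have hf1 : ∀ ω, f ω ≤ 1 := fun ω => (hrange f hf ω).2
    set M : ℝ := ∑ ω, f ω * μ ω with hM
    -- decomposition
    have e1 : (∑ i : Fin n, (M - f (x i)))
        = (∑ y : Fin n → Ω, ν y * (∑ i : Fin n, (M - f (y i))))
          + ∑ y : Fin n → Ω, ν y * (∑ i : Fin n, (f (y i) - f (x i))) := by
      rw [← Finset.sum_add_distrib]
      have hpt : ∀ y : Fin n → Ω,
          ν y * (∑ i : Fin n, (M - f (y i))) + ν y * (∑ i : Fin n, (f (y i) - f (x i)))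
          = ν y * (∑ i : Fin n, (M - f (x i))) := by
        intro y
        rw [← mul_add, ← Finset.sum_add_distrib]
        congr 1
        apply Finset.sum_congr rfl
        intro i _
        ring
      rw [Finset.sum_congr rfl (fun y _ => hpt y), ← Finset.sum_mul, hν1, one_mul]
    -- first part ≤ a
    have h1 : (∑ y : Fin n → Ω, ν y * (∑ i : Fin n, (M - f (y i)))) ≤ a := by
      calc (∑ y : Fin n → Ω, ν y * (∑ i : Fin n, (M - f (y i))))
          ≤ ∑ y : Fin n → Ω, ν y * a := by
            apply Finset.sum_le_sum
            intro y _
            by_cases hy : y ∈ A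
            · have hZy : Z y ≤ a := by
                rw [hAdef] at hy
                exact (Finset.mem_filter.mp hy).2
              have hle : (∑ i : Fin n, (M - f (y i))) ≤ Z y := by
                rw [hZ]
                exact Finset.le_sup' (fun f => ∑ i : Fin n, ((∑ ω, f ω * μ ω) - f (y i))) hf
              exact mul_le_mul_of_nonneg_left (hle.trans hZy) (hν0 y)
            · rw [hν_off y hy, zero_mul, zero_mul]
        _ = a := by rw [← Finset.sum_mul, hν1, one_mul]
    -- second part ≤ σ2/δ + δ * mNu
    have h2 : (∑ y : Fin n → Ω, ν y * (∑ i : Fin n, (f (y i) - f (x i))))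
        ≤ σ2 / δ + δ * mNu μ ν x := by
      have hswap : (∑ y : Fin n → Ω, ν y * (∑ i : Fin n, (f (y i) - f (x i))))
          = ∑ i : Fin n, ∑ y : Fin n → Ω, ν y * (f (y i) - f (x i)) := by
        simp_rw [Finset.mul_sum]
        exact Finset.sum_comm
      rw [hswap]
      have hi : ∀ i : Fin n,
          (∑ y : Fin n → Ω, ν y * (f (y i) - f (x i)))
          ≤ (∑ ω, f ω ^ 2 * μ ω) / δ
            + δ * ∑ ω : Ω,
              psi ((∑ y ∈ univ.filter (fun y : Fin n → Ω => y i = ω ∧ y i ≠ x i), ν y) / μ ω)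
                * μ ω := by
        intro i
        have hfib : (∑ y : Fin n → Ω, ν y * (f (y i) - f (x i)))
            = ∑ ω : Ω, ∑ y ∈ univ.filter (fun y : Fin n → Ω => y i = ω),
                ν y * (f (y i) - f (x i)) :=
          (Finset.sum_fiberwise univ (fun y => y i) (fun y => ν y * (f (y i) - f (x i)))).symm
        rw [hfib]
        have hperω : ∀ ω : Ω,
            (∑ y ∈ univ.filter (fun y : Fin n → Ω => y i = ω), ν y * (f (y i) - f (x i)))
            ≤ f ω ^ 2 * μ ω / δ
              + δ * (psi ((∑ y ∈ univ.filter (fun y : Fin n → Ω => y i = ω ∧ y i ≠ x i), ν y) / μ ω)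
                * μ ω) := by
          intro ω
          have hS0 : 0 ≤ ∑ y ∈ univ.filter (fun y : Fin n → Ω => y i = ω ∧ y i ≠ x i), ν y :=
            Finset.sum_nonneg fun y _ => hν0 y
          set S : ℝ := ∑ y ∈ univ.filter (fun y : Fin n → Ω => y i = ω ∧ y i ≠ x i), ν y
          have heq : (∑ y ∈ univ.filter (fun y : Fin n → Ω => y i = ω), ν y * (f (y i) - f (x i)))
              = S * (f ω - f (x i)) := by
            by_cases hωx : ω = x i
            · have hz : (∑ y ∈ univ.filter (fun y : Fin n → Ω => y i = ω),
                  ν y * (f (y i) - f (x i))) = 0 := by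
                apply Finset.sum_eq_zero
                intro y hy
                rw [(Finset.mem_filter.mp hy).2, hωx, sub_self, mul_zero]
              have hz2 : S = 0 := by
                apply Finset.sum_eq_zero
                intro y hy
                exact absurd ((Finset.mem_filter.mp hy).2.1.trans hωx)
                  (Finset.mem_filter.mp hy).2.2
              rw [hz, hz2, zero_mul]
            · have hfe : univ.filter (fun y : Fin n → Ω => y i = ω)
                  = univ.filter (fun y : Fin n → Ω => y i = ω ∧ y i ≠ x i) := by
                apply Finset.filter_congr
                intro y _
                constructor
                · intro h
                  exact ⟨h, h ▸ hωx⟩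
                · exact fun h => h.1
              calc (∑ y ∈ univ.filter (fun y : Fin n → Ω => y i = ω),
                      ν y * (f (y i) - f (x i)))
                  = ∑ y ∈ univ.filter (fun y : Fin n → Ω => y i = ω),
                      ν y * (f ω - f (x i)) := by
                    apply Finset.sum_congr rfl
                    intro y hy
                    rw [(Finset.mem_filter.mp hy).2]
                _ = (∑ y ∈ univ.filter (fun y : Fin n → Ω => y i = ω), ν y)
                      * (f ω - f (x i)) := (Finset.sum_mul _ _ _).symm
                _ = S * (f ω - f (x i)) := by rw [hfe]
          rw [heq]
          have hμω := hμpos ω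
          have hstep1 : S * (f ω - f (x i)) ≤ S * f ω :=
            mul_le_mul_of_nonneg_left (by linarith [hf0 (x i)]) hS0
          have ht1 : f ω / δ ≤ 1 := by
            rw [div_le_one hδ0]
            linarith [hf1 ω]
          have hkey := psi_key (f ω / δ) (S / μ ω) (div_nonneg (hf0 ω) hδ0.le) ht1
            (div_nonneg hS0 hμω.le)
          have h2' : (f ω / δ) * (S / μ ω) * (δ * μ ω)
              ≤ ((f ω / δ) ^ 2 + psi (S / μ ω)) * (δ * μ ω) :=
            mul_le_mul_of_nonneg_right hkey (by positivity)
          have e1' : (f ω / δ) * (S / μ ω) * (δ * μ ω) = S * f ω := by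
            field_simp
          have e2' : ((f ω / δ) ^ 2 + psi (S / μ ω)) * (δ * μ ω)
              = f ω ^ 2 * μ ω / δ + δ * (psi (S / μ ω) * μ ω) := by
            field_simp
          rw [e1', e2'] at h2'
          linarith
        calc (∑ ω : Ω, ∑ y ∈ univ.filter (fun y : Fin n → Ω => y i = ω),
                ν y * (f (y i) - f (x i)))
            ≤ ∑ ω : Ω, (f ω ^ 2 * μ ω / δ
              + δ * (psi ((∑ y ∈ univ.filter (fun y : Fin n → Ω => y i = ω ∧ y i ≠ x i), ν y) / μ ω)
                * μ ω)) := Finset.sum_le_sum fun ω _ => hperω ω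
          _ = (∑ ω, f ω ^ 2 * μ ω) / δ
              + δ * ∑ ω : Ω,
                psi ((∑ y ∈ univ.filter (fun y : Fin n → Ω => y i = ω ∧ y i ≠ x i), ν y) / μ ω)
                  * μ ω := by
            rw [Finset.sum_add_distrib, ← Finset.sum_div, ← Finset.mul_sum]
      calc (∑ i : Fin n, ∑ y : Fin n → Ω, ν y * (f (y i) - f (x i)))
          ≤ ∑ i : Fin n, ((∑ ω, f ω ^ 2 * μ ω) / δ
            + δ * ∑ ω : Ω,
              psi ((∑ y ∈ univ.filter (fun y : Fin n → Ω => y i = ω ∧ y i ≠ x i), ν y) / μ ω)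
                * μ ω) := Finset.sum_le_sum fun i _ => hi i
        _ = (n : ℝ) * ((∑ ω, f ω ^ 2 * μ ω) / δ) + δ * mNu μ ν x := by
            rw [Finset.sum_add_distrib, ← Finset.mul_sum, Finset.sum_const, Finset.card_univ,
              Fintype.card_fin, nsmul_eq_mul, mNu]
        _ ≤ σ2 / δ + δ * mNu μ ν x := by
            have hsup : (∑ ω, f ω ^ 2 * μ ω) ≤ F.sup' hF (fun f => ∑ ω, f ω ^ 2 * μ ω) :=
              Finset.le_sup' (fun f => ∑ ω, f ω ^ 2 * μ ω) hf
            have hns : (n : ℝ) * (∑ ω, f ω ^ 2 * μ ω) ≤ σ2 := by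
              rw [hσ2]
              exact mul_le_mul_of_nonneg_left hsup (Nat.cast_nonneg n)
            have hdiv : ((n : ℝ) * (∑ ω, f ω ^ 2 * μ ω)) / δ ≤ σ2 / δ :=
              (div_le_div_iff_of_pos_right hδ0).mpr hns
            have hrw : (n : ℝ) * ((∑ ω, f ω ^ 2 * μ ω) / δ)
                = ((n : ℝ) * (∑ ω, f ω ^ 2 * μ ω)) / δ := by ring
            linarith [hrw ▸ hdiv]
    linarith [e1, h1, h2]
  -- conclude via the infimum
  obtain ⟨y0, hy0⟩ := hAne
  set Sset := { r : ℝ | ∃ ν : (Fin n → Ω) → ℝ,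
    (∀ y, 0 ≤ ν y) ∧ (∑ y, ν y = 1) ∧ (∑ y ∈ A, ν y = 1) ∧ r = mNu μ ν x } with hSset
  have hne : Sset.Nonempty := by
    refine ⟨mNu μ (fun y => if y = y0 then (1:ℝ) else 0) x,
      fun y => if y = y0 then (1:ℝ) else 0, ?_, ?_, ?_, rfl⟩
    · intro y
      dsimp only
      split_ifs <;> norm_num
    · simp
    · simp [hy0]
  have hlb : ∀ r ∈ Sset, (Z x - a - σ2 / δ) / δ ≤ r := by
    rintro r ⟨ν, hν0, hν1, hνA, rfl⟩
    have := key ν hν0 hν1 hνA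
    rw [div_le_iff₀ hδ0]
    linarith
  have hinf : (Z x - a - σ2 / δ) / δ ≤ mA μ A x := le_csInf hne hlb
  rw [div_le_iff₀ hδ0] at hinf
  linarith
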